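/- Let M be a round matroid. Then the tree-width of M equals r(M). -/

import Mathlib

open Set

namespace Matroid

variable {α : Type*} {β : Type*}

/-- The rank of a set in a matroid: the supremum of sizes of independent subsets. -/
noncomputable def mRank (M : Matroid α) (X : Set α) : ℕ :=
  sSup {n : ℕ | ∃ I, M.Indep I ∧ I ⊆ X ∧ I.ncard = n}

/-- The rank of a matroid. -/
noncomputable def mRk (M : Matroid α) : ℕ := M.mRank M.E

/-- A flat `F` is modular if `r F + r F' = r (F ∪ F') + r (F ∩ F')` for every flat `F'`. -/
def IsModularFlat (M : Matroid α) (F : Set α) : Prop :=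
  M.IsFlat F ∧ ∀ F', M.IsFlat F' →
    M.mRank F + M.mRank F' = M.mRank (F ∪ F') + M.mRank (F ∩ F')

/-- A proper flat is a flat other than the ground set. -/
def IsProperFlat (M : Matroid α) (F : Set α) : Prop := M.IsFlat F ∧ F ≠ M.E

/-- A vertical cover is a pair of proper flats whose union is the ground set. -/
def VerticalCover (M : Matroid α) (F F' : Set α) : Prop :=
  M.IsProperFlat F ∧ M.IsProperFlat F' ∧ F ∪ F' = M.E

/-- A modular cover is a vertical cover by two modular flats. -/
def ModularCover (M : Matroid α) (F F' : Set α) : Prop :=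
  M.VerticalCover F F' ∧ M.IsModularFlat F ∧ M.IsModularFlat F'

/-- A matroid is round if it has no vertical cover. -/
def Round (M : Matroid α) : Prop := ∀ F F', ¬ M.VerticalCover F F'

/-- A subset of the ground set is round if the restriction to it is round. -/
def RoundSet (M : Matroid α) (X : Set α) : Prop := X ⊆ M.E ∧ (M ↾ X).Round

/-- A rotunda is a maximal round flat. -/
def Rotunda (M : Matroid α) (R : Set α) : Prop :=
  M.IsFlat R ∧ M.RoundSet R ∧ ∀ R', M.IsFlat R' → M.RoundSet R' → R ⊆ R' → R' = R

/-- A matroid of rank `r` is supersolvable if there is a chain of modular flats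
`F 0 ⊆ F 1 ⊆ ⋯ ⊆ F r` with `r (F i) = i` for each `i`. -/
def Supersolvable (M : Matroid α) : Prop :=
  ∃ F : ℕ → Set α, (∀ i ≤ M.mRk, M.IsModularFlat (F i) ∧ M.mRank (F i) = i) ∧
    ∀ i < M.mRk, F i ⊆ F (i + 1)

/-- A matroid is saturated if every round flat is modular. -/
def Saturated (M : Matroid α) : Prop :=
  ∀ F, M.IsFlat F → M.RoundSet F → M.IsModularFlat F

/-- A circuit: a minimal dependent subset of the ground set. -/
def Circ (M : Matroid α) (C : Set α) : Prop :=
  C ⊆ M.E ∧ ¬ M.Indep C ∧ ∀ D ⊂ C, M.Indep D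

/-- A matroid is connected if it is non-empty and every two distinct elements lie in a
common circuit. -/
def ConnectedM (M : Matroid α) : Prop :=
  M.E.Nonempty ∧ ∀ x ∈ M.E, ∀ y ∈ M.E, x = y ∨ ∃ C, M.Circ C ∧ x ∈ C ∧ y ∈ C

/-- A hyperplane: a flat of rank `r M - 1`. -/
def IsHyperplane (M : Matroid α) (H : Set α) : Prop :=
  M.IsFlat H ∧ M.mRank H + 1 = M.mRk

/-- The union of the projections `P_H(x, y) = H ∩ cl (x ∪ y)` onto the modular hyperplane `H`,
taken over all pairs of distinct rank-one flats `x = cl {a}`, `y = cl {b}` spanned by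
elements `a, b` of `X`. -/
def projUnion (M : Matroid α) (H X : Set α) : Set α :=
  ⋃ a ∈ X, ⋃ b ∈ X, ⋃ (_ : M.closure {a} ≠ M.closure {b}), H ∩ M.closure {a, b}

/-- Two elements are related if they are equal or lie in a common circuit; the connected
components of a matroid are the restrictions to the equivalence classes of this relation. -/
def connRel (M : Matroid α) (x y : α) : Prop :=
  x = y ∨ ∃ C, M.Circ C ∧ x ∈ C ∧ y ∈ C

/-- The rotunda graph of a matroid: vertices are the rotunda; two rotunda are adjacent if
they intersect and there is a modular cover separating them at their intersection. -/
def rotundaGraph (M : Matroid α) : SimpleGraph {R : Set α // M.Rotunda R} where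
  Adj R₁ R₂ := R₁ ≠ R₂ ∧ (R₁.1 ∩ R₂.1).Nonempty ∧
    ∃ F₁ F₂, M.ModularCover F₁ F₂ ∧ R₁.1 ⊆ F₁ ∧ R₂.1 ⊆ F₂ ∧ F₁ ∩ F₂ = R₁.1 ∩ R₂.1
  symm := by
    constructor
    rintro a b ⟨hne, hint, F₁, F₂, ⟨⟨hp1, hp2, hu⟩, hm1, hm2⟩, h1, h2, hi⟩
    refine ⟨hne.symm, by rwa [Set.inter_comm], F₂, F₁,
      ⟨⟨hp2, hp1, by rwa [Set.union_comm]⟩, hm2, hm1⟩, h2, h1, ?_⟩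
    rw [Set.inter_comm, hi, Set.inter_comm]
  loopless := ⟨fun a h => h.1 rfl⟩

/-- A rotunda tree of `M`: a tree on the rotunda of `M` such that for each element `x` of the
ground set, the rotunda containing `x` induce a (nonempty) subtree. -/
def IsRotundaTree (M : Matroid α) (T : SimpleGraph {R : Set α // M.Rotunda R}) : Prop :=
  T.IsTree ∧ ∀ x ∈ M.E, (T.induce {t : {R : Set α // M.Rotunda R} | x ∈ t.1}).Connected

/-- A legitimate weighting of `M`: zero on the empty set, and strictly monotone under proper
inclusion on the set consisting of `∅` and the pairwise intersections of distinct rotunda. -/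
def LegitimateWeighting (M : Matroid α) (σ : Set α → ℕ) : Prop :=
  σ ∅ = 0 ∧
  ∀ X X' : Set α,
    (X = ∅ ∨ ∃ R R', M.Rotunda R ∧ M.Rotunda R' ∧ R ≠ R' ∧ X = R ∩ R') →
    (X' = ∅ ∨ ∃ R R', M.Rotunda R ∧ M.Rotunda R' ∧ R ≠ R' ∧ X' = R ∩ R') →
    X ⊂ X' → σ X < σ X'

/-- The total weight of a graph on the rotunda of `M`, where the edge joining rotunda
`R` and `R'` gets weight `σ (R ∩ R')`. -/
noncomputable def treeWeight {M : Matroid α} (σ : Set α → ℕ)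
    (T : SimpleGraph {R : Set α // M.Rotunda R}) : ℕ :=
  ∑ᶠ e ∈ T.edgeSet,
    Sym2.lift ⟨fun a b => σ (a.1 ∩ b.1), fun a b => by simp [Set.inter_comm]⟩ e

/-- A tree-decomposition of a matroid: a tree together with bags covering the ground set. -/
def IsTreeDecomp (M : Matroid α) (T : SimpleGraph β) (τ : β → Set α) : Prop :=
  T.IsTree ∧ ∀ x ∈ M.E, ∃ t, x ∈ τ t

/-- The node-width of a node `t` in a tree-decomposition `(T, τ)` of `M`:
`(Σ_i r (τ t ∪ ⋃_{k ≠ i} F_k)) − (d − 1) · r M`, where `F_1, …, F_d` are the unions of the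
bags over the connected components of `T − t`. -/
noncomputable def nodeWidth (M : Matroid α) (T : SimpleGraph β) (τ : β → Set α) (t : β) : ℤ :=
  (∑ᶠ c : (T.induce {s : β | s ≠ t}).ConnectedComponent,
      (M.mRank (τ t ∪ ⋃ (s : {s : β // s ≠ t})
        (_ : (T.induce {s : β | s ≠ t}).connectedComponentMk s ≠ c), τ s.1) : ℤ))
    - ((Nat.card (T.induce {s : β | s ≠ t}).ConnectedComponent : ℤ) - 1) * (M.mRk : ℤ)

/-- The width of a tree-decomposition: the maximum node-width. -/
noncomputable def decompWidth (M : Matroid α) (T : SimpleGraph β) (τ : β → Set α) : ℤ :=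
  sSup (Set.range (M.nodeWidth T τ))

/-- The tree-width of a matroid: the minimum width of a (finite) tree-decomposition. -/
noncomputable def treeWidth (M : Matroid α) : ℕ :=
  sInf {n : ℕ | ∃ (β : Type) (T : SimpleGraph β) (τ : β → Set α),
    Finite β ∧ M.IsTreeDecomp T τ ∧ ∀ t, M.nodeWidth T τ t ≤ (n : ℤ)}

end Matroid

namespace SimpleGraph

/-- A graph is chordal if every cycle with at least four edges has a chord: an edge of the
graph joining two vertices of the cycle that is not an edge of the cycle. -/
def IsChordal {V : Type*} (G : SimpleGraph V) : Prop :=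
  ∀ ⦃v : V⦄ (w : G.Walk v v), w.IsCycle → 4 ≤ w.length →
    ∃ x y, x ∈ w.support ∧ y ∈ w.support ∧ G.Adj x y ∧ s(x, y) ∉ w.edges

/-- A maximal clique of a graph. -/
def MaxClique {V : Type*} (G : SimpleGraph V) (C : Set V) : Prop :=
  G.IsClique C ∧ ∀ D, G.IsClique D → C ⊆ D → D = C

/-- The reduced clique graph of a graph: vertices are the maximal cliques; two maximal
cliques are adjacent if they intersect and every walk from one side to the other passes
through their intersection. -/
def reducedCliqueGraph {V : Type*} (G : SimpleGraph V) :
    SimpleGraph {C : Set V // G.MaxClique C} where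
  Adj C₁ C₂ := C₁ ≠ C₂ ∧ (C₁.1 ∩ C₂.1).Nonempty ∧
    ∀ u ∈ C₁.1 \ C₂.1, ∀ v ∈ C₂.1 \ C₁.1, ∀ p : G.Walk u v,
      ∃ z ∈ p.support, z ∈ C₁.1 ∩ C₂.1
  symm := by
    constructor
    rintro a b ⟨hne, hint, hsep⟩
    refine ⟨hne.symm, by rwa [Set.inter_comm], fun u hu v hv p => ?_⟩
    obtain ⟨z, hz, hz2⟩ := hsep v hv u hu p.reverse
    refine ⟨z, ?_, by rwa [Set.inter_comm]⟩
    simpa [SimpleGraph.Walk.support_reverse] using hz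
  loopless := ⟨fun a h => h.1 rfl⟩

end SimpleGraph

section Aux

namespace Matroid

variable {α : Type*} {M : Matroid α} {X : Set α}

lemma mRank_set_bddAbove (M : Matroid α) [M.Finite] (X : Set α) :
    BddAbove {n : ℕ | ∃ I, M.Indep I ∧ I ⊆ X ∧ I.ncard = n} := by
  refine ⟨M.E.ncard, ?_⟩
  rintro n ⟨I, hI, -, rfl⟩
  exact Set.ncard_le_ncard hI.subset_ground M.ground_finite

lemma ncard_le_mRank [M.Finite] {I : Set α} (hI : M.Indep I) (hIX : I ⊆ X) :
    I.ncard ≤ M.mRank X :=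
  le_csSup (M.mRank_set_bddAbove X) ⟨I, hI, hIX, rfl⟩

lemma mRank_set_nonempty (M : Matroid α) (X : Set α) :
    {n : ℕ | ∃ I, M.Indep I ∧ I ⊆ X ∧ I.ncard = n}.Nonempty :=
  ⟨0, ∅, M.empty_indep, Set.empty_subset X, Set.ncard_empty α⟩

lemma mRank_le_mRk (M : Matroid α) [M.Finite] (X : Set α) : M.mRank X ≤ M.mRk := by
  refine csSup_le (M.mRank_set_nonempty X) ?_
  rintro n ⟨I, hI, -, rfl⟩
  exact ncard_le_mRank hI hI.subset_ground

lemma mRk_le_ncard_of_base [M.Finite] {B : Set α} (hB : M.IsBase B) : M.mRk ≤ B.ncard := by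
  refine csSup_le (M.mRank_set_nonempty M.E) ?_
  rintro n ⟨I, hI, -, rfl⟩
  obtain ⟨B', hB', hIB'⟩ := hI.exists_isBase_superset
  calc I.ncard ≤ B'.ncard :=
        Set.ncard_le_ncard hIB' (M.ground_finite.subset hB'.subset_ground)
    _ = B.ncard := hB'.ncard_eq_ncard_of_isBase hB

lemma mRk_le_of_closure_eq [M.Finite] (h : M.closure X = M.E) : M.mRk ≤ M.mRank X := by
  obtain ⟨I, hI⟩ := M.exists_isBasis' X
  have hcl : M.closure I = M.E := by rw [hI.closure_eq_closure, h]
  have hbase : M.IsBase I :=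
    hI.indep.isBase_of_spanning ((spanning_iff_closure_eq hI.indep.subset_ground).2 hcl)
  exact (mRk_le_ncard_of_base hbase).trans (ncard_le_mRank hI.indep hI.subset)

lemma flat_closure (M : Matroid α) (X : Set α) : M.IsFlat (M.closure X) := by
  rw [closure_def, Set.sInter_eq_iInter]
  have : Nonempty {F // F ∈ {F | M.IsFlat F ∧ X ∩ M.E ⊆ F}} :=
    ⟨⟨M.E, M.ground_isFlat, Set.inter_subset_right⟩⟩
  exact IsFlat.iInter fun F => F.2.1

lemma round_key [M.Finite] (hround : M.Round) {A B : Set α}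
    (hA : M.mRank A < M.mRk) (hB : M.mRank B < M.mRk) (hcov : M.E ⊆ A ∪ B) : False := by
  apply hround (M.closure A) (M.closure B)
  refine ⟨⟨M.flat_closure A, fun h => hA.not_ge (mRk_le_of_closure_eq h)⟩,
    ⟨M.flat_closure B, fun h => hB.not_ge (mRk_le_of_closure_eq h)⟩, ?_⟩
  apply subset_antisymm
    (Set.union_subset (M.closure_subset_ground A) (M.closure_subset_ground B))
  intro x hx
  rcases hcov hx with h | h
  · exact Or.inl (M.inter_ground_subset_closure A ⟨h, hx⟩)
  · exact Or.inr (M.inter_ground_subset_closure B ⟨h, hx⟩)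

end Matroid

namespace SimpleGraph

variable {β : Type*} {T : SimpleGraph β}

lemma reachable_induce_of_walk {s : Set β} : ∀ {a b : β} (w : T.Walk a b)
    (_ : ∀ v ∈ w.support, v ∈ s) (ha : a ∈ s) (hb : b ∈ s),
    (T.induce s).Reachable ⟨a, ha⟩ ⟨b, hb⟩ := by
  intro a b w
  induction w with
  | nil => exact fun _ _ _ => Reachable.refl _
  | @cons u v w h p ih =>
    intro hw ha hb
    have hv : v ∈ s := hw v (by simp)
    have hadj : (T.induce s).Adj ⟨u, ha⟩ ⟨v, hv⟩ := h
    exact hadj.reachable.trans (ih (fun x hx => hw x (by simp [hx])) hv hb)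

lemma exists_walk_of_induce_walk {s : Set β} {u v : ↥s} (w : (T.induce s).Walk u v) :
    ∃ p : T.Walk u.1 v.1, ∀ x ∈ p.support, x ∈ s := by
  induction w with
  | nil => exact ⟨Walk.nil, by simpa using u.2⟩
  | @cons a b c h p ih =>
    obtain ⟨q, hq⟩ := ih
    refine ⟨Walk.cons (show T.Adj a.1 b.1 from h) q, ?_⟩
    intro x hx
    rw [Walk.support_cons] at hx
    rcases List.mem_cons.1 hx with rfl | hx'
    · exact a.2
    · exact hq x hx'

lemma tree_sep [DecidableEq β] {t t' s0 : β} (hT : T.IsTree) (hadj : T.Adj t t')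
    {w1 : T.Walk s0 t'} (h1 : ∀ v ∈ w1.support, v ≠ t)
    {w2 : T.Walk s0 t} (h2 : ∀ v ∈ w2.support, v ≠ t') : False := by
  have hp1 : w1.bypass.IsPath := w1.bypass_isPath
  have hp2 : w2.bypass.IsPath := w2.bypass_isPath
  have ht_not : t ∉ w1.bypass.support := fun h => h1 t (w1.support_bypass_subset h) rfl
  have hq : (Walk.cons hadj w1.bypass.reverse).IsPath :=
    hp1.reverse.cons (by simpa [Walk.support_reverse] using ht_not)
  have heq : Walk.cons hadj w1.bypass.reverse = w2.bypass.reverse :=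
    (hT.existsUnique_path t s0).unique hq hp2.reverse
  have ht'1 : t' ∈ (Walk.cons hadj w1.bypass.reverse).support := by
    simp [Walk.support_cons, Walk.support_reverse]
  rw [heq] at ht'1
  refine h2 t' (w2.support_bypass_subset ?_) rfl
  simpa [Walk.support_reverse] using ht'1

lemma exists_adj_component [DecidableEq β] {t : β} (hT : T.IsTree)
    (c : (T.induce {s : β | s ≠ t}).ConnectedComponent) :
    ∃ (n : β) (hn : n ≠ t), T.Adj t n ∧
      (T.induce {s : β | s ≠ t}).connectedComponentMk ⟨n, hn⟩ = c := by
  obtain ⟨⟨s0, hs0⟩, rfl⟩ := c.exists_rep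
  obtain ⟨w⟩ := hT.isConnected.preconnected s0 t
  have hp : w.bypass.reverse.IsPath := w.bypass_isPath.reverse
  obtain ⟨n, hadj, q, hq⟩ := Walk.exists_eq_cons_of_ne (Ne.symm hs0) w.bypass.reverse
  rw [hq, Walk.cons_isPath_iff] at hp
  have hnt : n ≠ t := fun h => hp.2 (by rw [← h]; exact q.start_mem_support)
  refine ⟨n, hnt, hadj, ?_⟩
  refine ConnectedComponent.sound ?_
  exact reachable_induce_of_walk (s := {s : β | s ≠ t}) q
    (fun v hv h => hp.2 (by rw [← h]; exact hv)) hnt hs0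

end SimpleGraph

end Aux


section MainAux

open SimpleGraph

variable {α : Type*} {β : Type*}

/-- The set `τ t ∪ ⋃_{k ≠ c} F_k` appearing in the definition of node-width. -/
noncomputable def Matroid.bagUnion (M : Matroid α) (T : SimpleGraph β) (τ : β → Set α) (t : β)
    (c : (T.induce {s : β | s ≠ t}).ConnectedComponent) : Set α :=
  τ t ∪ ⋃ (s : {s : β // s ≠ t})
    (_ : (T.induce {s : β | s ≠ t}).connectedComponentMk s ≠ c), τ s.1

lemma Matroid.nodeWidth_eq (M : Matroid α) (T : SimpleGraph β) (τ : β → Set α) (t : β) :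
    M.nodeWidth T τ t =
      (∑ᶠ c : (T.induce {s : β | s ≠ t}).ConnectedComponent,
        (M.mRank (M.bagUnion T τ t c) : ℤ))
      - ((Nat.card (T.induce {s : β | s ≠ t}).ConnectedComponent : ℤ) - 1) * (M.mRk : ℤ) := rfl

end MainAux

open Matroid

/-- The tree-width of a round matroid equals its rank. -/
theorem treeWidth_of_round {α : Type*} (M : Matroid α) [M.Finite] (hround : M.Round) :
    M.treeWidth = M.mRk := by
  classical
  have hmem : M.mRk ∈ {n : ℕ | ∃ (β : Type) (T : SimpleGraph β) (τ : β → Set α),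
      Finite β ∧ M.IsTreeDecomp T τ ∧ ∀ t, M.nodeWidth T τ t ≤ (n : ℤ)} := by
    refine ⟨Unit, ⊥, fun _ => M.E, inferInstance,
      ⟨⟨⟨fun u v => by cases u; cases v; exact SimpleGraph.Reachable.refl _⟩, ?_⟩,
        fun x hx => ⟨(), hx⟩⟩, ?_⟩
    · intro v w hw
      cases w with
      | nil => exact hw.ne_nil rfl
      | cons h _ => simp at h
    · intro t
      have hE : IsEmpty ↥{s : Unit | s ≠ t} := ⟨fun x => x.2 (Subsingleton.elim _ _)⟩
      have hE2 : IsEmpty ((⊥ : SimpleGraph Unit).induce {s : Unit | s ≠ t}).ConnectedComponent :=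
        ⟨fun c => SimpleGraph.ConnectedComponent.ind (fun v => hE.false v) c⟩
      rw [M.nodeWidth_eq]
      rw [finsum_of_isEmpty, Nat.card_of_isEmpty]
      have : ((0 : ℤ) : ℤ) - ((0 : ℤ) - 1) * (M.mRk : ℤ) = (M.mRk : ℤ) := by ring
      simp only [Nat.cast_zero]
      linarith [this]
  have hlb : ∀ n ∈ {n : ℕ | ∃ (β : Type) (T : SimpleGraph β) (τ : β → Set α),
      Finite β ∧ M.IsTreeDecomp T τ ∧ ∀ t, M.nodeWidth T τ t ≤ (n : ℤ)}, M.mRk ≤ n := by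
    rintro n ⟨β, T, τ, hfin, ⟨htree, hcovx⟩, hwidth⟩
    by_contra hn
    push_neg at hn
    -- every node has a "small" component
    have hsmall : ∀ t : β, ∃ c, M.mRank (M.bagUnion T τ t c) < M.mRk := by
      intro t
      by_contra hall
      push_neg at hall
      have heq : ∀ c, (M.mRank (M.bagUnion T τ t c) : ℤ) = (M.mRk : ℤ) := fun c =>
        congrArg _ (le_antisymm (M.mRank_le_mRk _) (hall c))
      have hft : Fintype (T.induce {s : β | s ≠ t}).ConnectedComponent := Fintype.ofFinite _
      have hsum : (∑ᶠ c : (T.induce {s : β | s ≠ t}).ConnectedComponent,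
          (M.mRank (M.bagUnion T τ t c) : ℤ)) =
          (Nat.card (T.induce {s : β | s ≠ t}).ConnectedComponent : ℤ) * (M.mRk : ℤ) := by
        rw [finsum_congr heq, finsum_eq_sum_of_fintype, Finset.sum_const,
          Nat.card_eq_fintype_card, Finset.card_univ, nsmul_eq_mul]
      have hw := hwidth t
      rw [M.nodeWidth_eq, hsum] at hw
      have hring : (Nat.card (T.induce {s : β | s ≠ t}).ConnectedComponent : ℤ) * (M.mRk : ℤ)
          - ((Nat.card (T.induce {s : β | s ≠ t}).ConnectedComponent : ℤ) - 1) * (M.mRk : ℤ)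
          = (M.mRk : ℤ) := by ring
      have h2 : (M.mRk : ℤ) ≤ (n : ℤ) := by linarith
      exact absurd (Nat.cast_le.1 h2) (not_le.2 hn)
    choose c hc using hsmall
    choose nb hnb hadjnb hcc using fun t : β => SimpleGraph.exists_adj_component htree (c t)
    have hfF : Fintype β := Fintype.ofFinite β
    have hfE : Fintype T.edgeSet := Fintype.ofFinite _
    have hcard : Fintype.card T.edgeSet < Fintype.card β := by
      have h1 := htree.card_edgeFinset
      rw [SimpleGraph.edgeFinset_card] at h1
      omega
    obtain ⟨t, t', hne, hf⟩ := Fintype.exists_ne_map_eq_of_card_lt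
      (fun t : β => (⟨s(t, nb t), (SimpleGraph.mem_edgeSet T).2 (hadjnb t)⟩ : T.edgeSet)) hcard
    have hf' : s(t, nb t) = s(t', nb t') := congrArg Subtype.val hf
    rcases Sym2.eq_iff.1 hf' with ⟨h1, h2⟩ | ⟨ht1, ht2⟩
    · exact hne h1
    have hTadj : T.Adj t t' := ht2 ▸ hadjnb t
    have hcover : M.E ⊆ M.bagUnion T τ t (c t) ∪ M.bagUnion T τ t' (c t') := by
      intro x hx
      obtain ⟨u, hu⟩ := hcovx x hx
      by_cases hut : u = t
      · exact Or.inl (Set.mem_union_left _ (hut ▸ hu))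
      by_cases hut' : u = t'
      · exact Or.inr (Set.mem_union_left _ (hut' ▸ hu))
      have hkey : (T.induce {s : β | s ≠ t}).connectedComponentMk ⟨u, hut⟩ ≠ c t ∨
          (T.induce {s : β | s ≠ t'}).connectedComponentMk ⟨u, hut'⟩ ≠ c t' := by
        by_contra hb
        push_neg at hb
        obtain ⟨hb1, hb2⟩ := hb
        have e1 : (T.induce {s : β | s ≠ t}).connectedComponentMk ⟨t', Ne.symm hne⟩ = c t := by
          rw [← hcc t]; congr 1; exact Subtype.ext ht2.symm
        have e2 : (T.induce {s : β | s ≠ t'}).connectedComponentMk ⟨t, hne⟩ = c t' := by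
          rw [← hcc t']; congr 1; exact Subtype.ext ht1
        obtain ⟨w1i⟩ := SimpleGraph.ConnectedComponent.exact (hb1.trans e1.symm)
        obtain ⟨w2i⟩ := SimpleGraph.ConnectedComponent.exact (hb2.trans e2.symm)
        obtain ⟨w1, hw1⟩ := SimpleGraph.exists_walk_of_induce_walk w1i
        obtain ⟨w2, hw2⟩ := SimpleGraph.exists_walk_of_induce_walk w2i
        exact SimpleGraph.tree_sep htree hTadj hw1 hw2
      rcases hkey with hk | hk
      · exact Or.inl (Set.mem_union_right _
          (Set.mem_iUnion.2 ⟨⟨u, hut⟩, Set.mem_iUnion.2 ⟨hk, hu⟩⟩))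
      · exact Or.inr (Set.mem_union_right _
          (Set.mem_iUnion.2 ⟨⟨u, hut'⟩, Set.mem_iUnion.2 ⟨hk, hu⟩⟩))
    exact Matroid.round_key hround (hc t) (hc t') hcover
  exact le_antisymm (Nat.sInf_le hmem) (le_csInf ⟨_, hmem⟩ hlb)
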